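/- Suppose m,n > 1 and fix a swap sequence of length at most K transforming the initial placement of the constructed token swapping instance into its target placement. Let S be a set of tokens that are all slot tokens or all non-slot tokens, and let g be a gadget (the ordering gadget or one of the slot gadgets). Suppose either (1) at some time during the sequence all tokens of S are in g, but each token of S was outside g at some earlier time and at some later time, or (2) at two times τ_1 < τ_2 all tokens of S are in g, but each token of S is at the root at some time between τ_1 and τ_2. Then the tokens of S make at least |S|²/2 contrary moves during the sequence, and consequently |S| ≤ k^{1/2+1/25}. -/

import Mathlib

namespace UnweightedTS

/-- Vertices of the constructed tree: the root, ordering-gadget vertices `ord d`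
(distance `d+1` from the root), slot-gadget path vertices `slot i d` (distance `d+1`
from the root in slot gadget `i`), and nooks.  (Coordinates range over all of `ℕ`;
the graph below only has edges between the vertices of the construction, so the
remaining vertices are isolated and carry no tokens.) -/
inductive Vtx (m : ℕ) where
  | root : Vtx m
  | ord : ℕ → Vtx m
  | slot : Fin m → ℕ → Vtx m
  | nook : Fin m → Vtx m
deriving DecidableEq

/-- Adjacency generator for the tree: `len i` = length of the path of slot gadget `i`,
`lenOrd` = length of the ordering path, `nd` = distance from the root of the path
vertex to which the nook of each slot gadget is attached. -/
def rel {m : ℕ} (len : Fin m → ℕ) (lenOrd nd : ℕ) : Vtx m → Vtx m → Prop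
  | .root, .ord d => d = 0 ∧ 0 < lenOrd
  | .ord d, .ord d' => d' = d + 1 ∧ d' < lenOrd
  | .root, .slot i d => d = 0 ∧ 0 < len i
  | .slot i d, .slot i' d' => i = i' ∧ d' = d + 1 ∧ d' < len i
  | .slot i d, .nook i' => i = i' ∧ d + 1 = nd ∧ d < len i
  | _, _ => False

/-- The constructed tree, as a simple graph. -/
def Tree {m : ℕ} (len : Fin m → ℕ) (lenOrd nd : ℕ) : SimpleGraph (Vtx m) :=
  SimpleGraph.fromRel (rel len lenOrd nd)

/-- Swap the two values `e.1`, `e.2`. -/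
def swapV {V : Type*} [DecidableEq V] (e : V × V) (v : V) : V :=
  if v = e.1 then e.2 else if v = e.2 then e.1 else v

/-- Apply a sequence of swaps to a token placement (token ↦ vertex). -/
def applySwaps {T V : Type*} [DecidableEq V] (σ : List (V × V)) (f : T → V) : T → V :=
  σ.foldl (fun g e => fun t => swapV e (g t)) f

/-- Apply a sequence of star swaps (each given by a leaf) to a placement on the star
with center `none` and leaves `some l`. -/
def starApply {L : Type*} [DecidableEq L] (σ : List L) (f : Option L → Option L) :
    Option L → Option L :=
  σ.foldl (fun g l => fun t => swapV ((none : Option L), some l) (g t)) f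

/-- The Star STS instance is a YES instance. -/
def StarSTSYes {L : Type*} [DecidableEq L] (π : Equiv.Perm (Option L)) (σ : List L) : Prop :=
  ∃ σ' : List L, σ'.Sublist σ ∧ starApply σ' id = ⇑π

/-- `k = (mn)^25`, the length of a big segment. -/
def kk (m n : ℕ) : ℕ := (m * n) ^ 25

/-- `k' = k / n^8`, the length of a padding segment. -/
def kk' (m n : ℕ) : ℕ := kk m n / n ^ 8

variable {m n : ℕ}

/-- `nᵢ`: the number of occurrences of slot `i` in the swap sequence. -/
def cnt (s : Fin n → Fin m) (i : Fin m) : ℕ :=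
  (Finset.univ.filter fun j : Fin n => s j = i).card

/-- Length of the ordering path: `nk + nmk'`. -/
def lenOrd (m n : ℕ) : ℕ := n * kk m n + n * m * kk' m n

/-- Length of the path of slot gadget `i`: `nᵢ k + n k'`. -/
def lenSlot (s : Fin n → Fin m) (i : Fin m) : ℕ := cnt s i * kk m n + n * kk' m n

/-- The non-item tokens: big segments `xⱼ`, `yⱼ` of `k` tokens each, and padding
segments `p_{i,j}`, `q_{i,j}` of `k'` tokens each (in this order of the sum). -/
abbrev NonItem (m n : ℕ) :=
  (Fin n × Fin (kk m n)) ⊕ (Fin n × Fin (kk m n)) ⊕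
    (Fin m × Fin n × Fin (kk' m n)) ⊕ (Fin m × Fin n × Fin (kk' m n))

/-- All tokens: item tokens (`Option (Fin m)`, `none` = item 0) and the non-item
tokens. -/
abbrev Tok (m n : ℕ) := Option (Fin m) ⊕ NonItem m n

/-- The constructed tree: ordering path of length `nk + nmk'`, slot path `i` of
length `nᵢk + nk'`, nooks attached at distance `k` from the root. -/
def TheGraph (s : Fin n → Fin m) : SimpleGraph (Vtx m) :=
  Tree (lenSlot s) (lenOrd m n) (kk m n)

/-- The distance from the root, in slot gadget `i`, at which the block of segment
`q_{i,j}` (preceded by `yⱼ` when `s j = i`) starts in the initial configuration. -/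
def offQ (s : Fin n → Fin m) (i : Fin m) (j : Fin n) : ℕ :=
  ∑ j' ∈ Finset.univ.filter (fun j' : Fin n => j'.val < j.val),
    (kk' m n + if s j' = i then kk m n else 0)

/-- The slot occurring next after position `j` in the swap sequence, if any. -/
def nxt (s : Fin n → Fin m) (j : Fin n) : Option (Fin m) :=
  if h : j.val + 1 < n then some (s ⟨j.val + 1, h⟩) else none

/-- The rank (`0`-based position) of the padding segment `q_{i,j}` among the `m`
padding segments following `yⱼ` in the target configuration of the ordering gadget:
`q_{s_{j+1},j}` first, `q_{s_j,j}` last, and the others in increasing order of `i`. -/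
def rho (s : Fin n → Fin m) (i : Fin m) (j : Fin n) : ℕ :=
  if some i = nxt s j then 0
  else if i = s j then m - 1
  else (if (nxt s j).isSome then 1 else 0) +
    (Finset.univ.filter fun i' : Fin m =>
      i'.val < i.val ∧ i' ≠ s j ∧ some i' ≠ nxt s j).card

/-- The distance from the root, in slot gadget `i`, at which the block of segment
`p_{i,j}` (followed by `xⱼ` when `s j = i`) starts in the target configuration. -/
def tOffP (s : Fin n → Fin m) (i : Fin m) (j : Fin n) : ℕ :=
  ∑ j' ∈ Finset.univ.filter (fun j' : Fin n => j.val < j'.val),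
    (kk' m n + if s j' = i then kk m n else 0)

/-- The initial placement of the tokens.  Item `0` is at the root and item `i` at the
nook of slot gadget `i`.  The ordering gadget contains, from the root outward, the
blocks `x₁, p_{·,1}, x₂, p_{·,2}, …, xₙ, p_{·,n}` (the `m` padding blocks after `xⱼ`
ordered by `rho`); slot gadget `i` contains, from the root outward, the blocks
`q_{i,1},…,q_{i,n}` with `yⱼ` inserted immediately on the root side of `q_{i,j}`
whenever `s j = i`.  Within a segment the coordinate `a` increases away from the root
in slot gadgets and away from the root in the ordering gadget. -/
def initTok (s : Fin n → Fin m) : Tok m n → Vtx m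
  | Sum.inl none => .root
  | Sum.inl (some i) => .nook i
  | Sum.inr (Sum.inl (j, a)) => .ord (j.val * (kk m n + m * kk' m n) + a.val)
  | Sum.inr (Sum.inr (Sum.inl (j, a))) => .slot (s j) (offQ s (s j) j + a.val)
  | Sum.inr (Sum.inr (Sum.inr (Sum.inl (i, j, a)))) =>
      .ord (j.val * (kk m n + m * kk' m n) + kk m n + rho s i j * kk' m n + a.val)
  | Sum.inr (Sum.inr (Sum.inr (Sum.inr (i, j, a)))) =>
      .slot i (offQ s i j + (if s j = i then kk m n else 0) + a.val)

/-- The target placement of the tokens.  Item `o` goes to the position of item `π o`;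
the ordering gadget contains, from its far end toward the root, the blocks
`y₁, q_{·,1}, y₂, q_{·,2}, …, yₙ, q_{·,n}` (the `m` padding blocks after `yⱼ` ordered
by `rho`); slot gadget `i` contains, from the root outward, the blocks
`p_{i,n},…,p_{i,1}` with `xⱼ` inserted immediately after (away from the root)
`p_{i,j}` whenever `s j = i`.  The left-to-right order of the tokens within each
segment is the same as in the initial configuration. -/
def tgtTok (s : Fin n → Fin m) (π : Equiv.Perm (Option (Fin m))) : Tok m n → Vtx m
  | Sum.inl o => (match π o with | none => .root | some i => .nook i)
  | Sum.inr (Sum.inl (j, a)) =>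
      .slot (s j) (tOffP s (s j) j + kk' m n + (kk m n - 1 - a.val))
  | Sum.inr (Sum.inr (Sum.inl (j, a))) =>
      .ord (lenOrd m n - 1 - (j.val * (kk m n + m * kk' m n) + a.val))
  | Sum.inr (Sum.inr (Sum.inr (Sum.inl (i, j, a)))) =>
      .slot i (tOffP s i j + (kk' m n - 1 - a.val))
  | Sum.inr (Sum.inr (Sum.inr (Sum.inr (i, j, a)))) =>
      .ord (lenOrd m n - 1 -
        (j.val * (kk m n + m * kk' m n) + kk m n + rho s i j * kk' m n + a.val))

/-- `d_t`: the tree distance between token `t`'s initial and target vertices. -/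
noncomputable def dd (s : Fin n → Fin m) (π : Equiv.Perm (Option (Fin m)))
    (t : Tok m n) : ℕ :=
  (TheGraph s).dist (initTok s t) (tgtTok s π t)

end UnweightedTS

namespace UnweightedTS

variable {m n : ℕ}

/-- The placement after the first `τ` swaps of `σ` (time `τ`). -/
def placeAt (σ : List (Vtx m × Vtx m)) (f : Tok m n → Vtx m) (τ : ℕ) : Tok m n → Vtx m :=
  applySwaps (σ.take τ) f

/-- `isLeftMove u v` holds when a token moving across an edge from `u` to `v` makes a
*left* move: towards the root within a slot gadget (including out of a nook), or away
from the root within the ordering gadget. -/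
def isLeftMove : Vtx m → Vtx m → Bool
  | .root, .ord _ => true
  | .ord _, .root => false
  | .ord d, .ord d' => decide (d < d')
  | .root, .slot _ _ => false
  | .slot _ _, .root => true
  | .slot _ d, .slot _ d' => decide (d' < d)
  | .nook _, .slot _ _ => true
  | .slot _ _, .nook _ => false
  | _, _ => false

/-- A token of a `y` or `q` segment (initial vertex in a slot gadget). -/
def isSlotTok : Tok m n → Prop
  | Sum.inr (Sum.inr (Sum.inl _)) => True
  | Sum.inr (Sum.inr (Sum.inr (Sum.inr _))) => True
  | _ => False

/-- A token of an `x` or `p` segment (initial vertex in the ordering gadget). -/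
def isNonSlotTok : Tok m n → Prop
  | Sum.inr (Sum.inl _) => True
  | Sum.inr (Sum.inr (Sum.inr (Sum.inl _))) => True
  | _ => False

/-- `isContrary t u v` holds when a move of token `t` from `u` to `v` is a *contrary*
move: a right move of a slot token, a right move of an item token, or a left move of a
non-slot token. -/
def isContrary (t : Tok m n) (u v : Vtx m) : Bool :=
  match t with
  | Sum.inr (Sum.inl _) => isLeftMove u v
  | Sum.inr (Sum.inr (Sum.inr (Sum.inl _))) => isLeftMove u v
  | _ => !isLeftMove u v

/-- `c_t`: the number of contrary moves made by token `t` during the swap sequence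
(starting from the placement `f`). -/
def cCount (t : Tok m n) : List (Vtx m × Vtx m) → (Tok m n → Vtx m) → ℕ
  | [], _ => 0
  | e :: rest, f =>
      ((if f t = e.1 ∧ isContrary t e.1 e.2 = true then 1 else 0) +
        (if f t = e.2 ∧ isContrary t e.2 e.1 = true then 1 else 0)) +
        cCount t rest (fun t' => swapV e (f t'))

/-- Membership of a vertex in a gadget (`none` = the ordering gadget, `some i` = slot
gadget `i`, which includes its nook).  The root belongs to no gadget. -/
def memGadget : Vtx m → Option (Fin m) → Prop
  | .ord _, none => True
  | .slot i _, some i' => i = i'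
  | .nook i, some i' => i = i'
  | _, _ => False

/-- The pair of tokens `t₁`, `t₂` is exchanged by the swap at step `idx` of `σ`. -/
def swapsPairAt (σ : List (Vtx m × Vtx m)) (f : Tok m n → Vtx m) (idx : ℕ)
    (t₁ t₂ : Tok m n) : Prop :=
  ∃ h : idx < σ.length,
    (placeAt σ f idx t₁ = (σ.get ⟨idx, h⟩).1 ∧ placeAt σ f idx t₂ = (σ.get ⟨idx, h⟩).2) ∨
    (placeAt σ f idx t₁ = (σ.get ⟨idx, h⟩).2 ∧ placeAt σ f idx t₂ = (σ.get ⟨idx, h⟩).1)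

/-- No pair of tokens swaps with each other more than once during `σ`. -/
def MinimalSeq (σ : List (Vtx m × Vtx m)) (f : Tok m n → Vtx m) : Prop :=
  ∀ (t₁ t₂ : Tok m n) (i₁ i₂ : ℕ), i₁ < i₂ →
    swapsPairAt σ f i₁ t₁ t₂ → ¬ swapsPairAt σ f i₂ t₁ t₂

/-- The gadget containing a vertex, if any. -/
def gadgetOfV : Vtx m → Option (Fin m)
  | .slot i _ => some i
  | .nook i => some i
  | _ => none

/-- The free item token at time `τ`: the item token that was most recently at the
root (initially item `0`, i.e. `none`). -/
noncomputable def freeAt (σ : List (Vtx m × Vtx m)) (f : Tok m n → Vtx m) :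
    ℕ → Option (Fin m)
  | 0 => none
  | τ + 1 =>
      if h : ∃ o : Option (Fin m), placeAt σ f (τ + 1) (Sum.inl o) = Vtx.root then
        h.choose
      else freeAt σ f τ

/-- The exchange sequence `χ` built from the first `τ` steps: each time an item token
that was just in slot gadget `i` becomes the new free item token, `i` is appended. -/
noncomputable def chiList (σ : List (Vtx m × Vtx m)) (f : Tok m n → Vtx m) :
    ℕ → List (Fin m)
  | 0 => []
  | τ + 1 =>
      chiList σ f τ ++
        (if freeAt σ f (τ + 1) ≠ freeAt σ f τ then
          (match gadgetOfV (placeAt σ f τ (Sum.inl (freeAt σ f (τ + 1)))) with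
            | some i => [i]
            | none => [])
        else [])

end UnweightedTS

namespace UnweightedTS


section Aux
variable {m n : ℕ}

/-- Height potential: positive in slot gadgets, negative in the ordering gadget. -/
def zhgt (κ : ℕ) : Vtx m → ℤ
  | .root => 0
  | .ord d => -((d : ℤ) + 1)
  | .slot _ d => (d : ℤ) + 1
  | .nook _ => (κ : ℤ) + 1

/-- Depth within a fixed gadget, `0` outside it. -/
def zphi (κ : ℕ) (g : Option (Fin m)) : Vtx m → ℕ
  | .ord d => if g = none then d + 1 else 0
  | .slot i d => if g = some i then d + 1 else 0
  | .nook i => if g = some i then κ + 1 else 0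
  | .root => 0

lemma theGraph_adj {s : Fin n → Fin m} {u v : Vtx m} :
    (TheGraph s).Adj u v ↔ u ≠ v ∧
      (rel (lenSlot s) (lenOrd m n) (kk m n) u v ∨ rel (lenSlot s) (lenOrd m n) (kk m n) v u) := by
  rw [TheGraph, Tree, SimpleGraph.fromRel_adj]

lemma zhgt_adj {s : Fin n → Fin m} {u v : Vtx m} (h : (TheGraph s).Adj u v) :
    zhgt (kk m n) v = zhgt (kk m n) u + (if isLeftMove u v then -1 else 1) := by
  rw [theGraph_adj] at h
  obtain ⟨hne, h | h⟩ := h <;>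
    rcases u with _ | d | ⟨i, d⟩ | i <;> rcases v with _ | d' | ⟨i', d'⟩ | i' <;>
    simp_all [rel, isLeftMove, zhgt] <;> omega

lemma isLeftMove_flip {s : Fin n → Fin m} {u v : Vtx m} (h : (TheGraph s).Adj u v) :
    isLeftMove v u = !isLeftMove u v := by
  rw [theGraph_adj] at h
  obtain ⟨hne, h | h⟩ := h <;>
    rcases u with _ | d | ⟨i, d⟩ | i <;> rcases v with _ | d' | ⟨i', d'⟩ | i' <;>
    simp_all [rel, isLeftMove] <;> omega

lemma zphi_lip {s : Fin n → Fin m} (g : Option (Fin m)) {u v : Vtx m}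
    (h : (TheGraph s).Adj u v) :
    zphi (kk m n) g v ≤ zphi (kk m n) g u + 1 := by
  rw [theGraph_adj] at h
  obtain ⟨hne, h | h⟩ := h <;>
    rcases u with _ | d | ⟨i, d⟩ | i <;> rcases v with _ | d' | ⟨i', d'⟩ | i' <;>
    simp_all [rel, zphi] <;> (try split) <;> (try simp_all) <;> omega

lemma zphi_left_slot {s : Fin n → Fin m} {i : Fin m} {u v : Vtx m}
    (h : (TheGraph s).Adj u v) (hl : isLeftMove u v = true) :
    zphi (kk m n) (some i) v ≤ zphi (kk m n) (some i) u := by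
  rw [theGraph_adj] at h
  obtain ⟨hne, h | h⟩ := h <;>
    rcases u with _ | d | ⟨i', d⟩ | i' <;> rcases v with _ | d'' | ⟨i'', d''⟩ | i'' <;>
    simp_all [rel, zphi, isLeftMove] <;> (try split) <;> (try simp_all) <;> omega

lemma zphi_right_ord {s : Fin n → Fin m} {u v : Vtx m}
    (h : (TheGraph s).Adj u v) (hl : isLeftMove u v = false) :
    zphi (kk m n) (none : Option (Fin m)) v ≤ zphi (kk m n) none u := by
  rw [theGraph_adj] at h
  obtain ⟨hne, h | h⟩ := h <;>
    rcases u with _ | d | ⟨i', d⟩ | i' <;> rcases v with _ | d'' | ⟨i'', d''⟩ | i'' <;>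
    simp_all [rel, zphi, isLeftMove] <;> (try split) <;> (try simp_all) <;> omega

lemma swapV_injective {V : Type*} [DecidableEq V] (e : V × V) :
    Function.Injective (swapV e) := by
  intro a b h
  unfold swapV at h
  split_ifs at h <;> simp_all

@[simp] lemma applySwaps_nil {T V : Type*} [DecidableEq V] (f : T → V) :
    applySwaps ([] : List (V × V)) f = f := rfl

lemma applySwaps_cons {T V : Type*} [DecidableEq V] (e : V × V) (l : List (V × V))
    (f : T → V) : applySwaps (e :: l) f = applySwaps l (fun t => swapV e (f t)) := rfl

lemma applySwaps_append {T V : Type*} [DecidableEq V] (l₁ l₂ : List (V × V))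
    (f : T → V) : applySwaps (l₁ ++ l₂) f = applySwaps l₂ (applySwaps l₁ f) := by
  simp [applySwaps, List.foldl_append]

lemma applySwaps_injective {T V : Type*} [DecidableEq V] (l : List (V × V))
    (f : T → V) (hf : Function.Injective f) : Function.Injective (applySwaps l f) := by
  induction l generalizing f with
  | nil => exact hf
  | cons e rest ih =>
      rw [applySwaps_cons]
      exact ih _ (fun a b hab => hf (swapV_injective e hab))

lemma cCount_append {m n : ℕ} (t : Tok m n) (l₁ l₂ : List (Vtx m × Vtx m))
    (f : Tok m n → Vtx m) :
    cCount t (l₁ ++ l₂) f = cCount t l₁ f + cCount t l₂ (applySwaps l₁ f) := by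
  induction l₁ generalizing f with
  | nil => simp [cCount]
  | cons e rest ih => simp [cCount, ih, applySwaps_cons]; ring

lemma placeAt_split {m n : ℕ} (σ : List (Vtx m × Vtx m)) (f : Tok m n → Vtx m)
    {a b : ℕ} (hab : a ≤ b) :
    placeAt σ f b = applySwaps ((σ.take b).drop a) (placeAt σ f a) := by
  unfold placeAt
  conv_lhs => rw [show σ.take b = (σ.take b).take a ++ (σ.take b).drop a from
    (List.take_append_drop a (σ.take b)).symm]
  rw [applySwaps_append, List.take_take, min_eq_left hab]

lemma cCount_sub_le {m n : ℕ} (t : Tok m n) (σ : List (Vtx m × Vtx m))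
    (f : Tok m n → Vtx m) {a b : ℕ} (hab : a ≤ b) :
    cCount t ((σ.take b).drop a) (placeAt σ f a) ≤ cCount t σ f := by
  conv_rhs => rw [show σ = σ.take b ++ σ.drop b from (List.take_append_drop b σ).symm]
  rw [cCount_append]
  refine le_trans ?_ (Nat.le_add_right _ _)
  conv_rhs => rw [show σ.take b = (σ.take b).take a ++ (σ.take b).drop a from
    (List.take_append_drop a (σ.take b)).symm]
  rw [cCount_append, List.take_take, min_eq_left hab]
  unfold placeAt
  exact Nat.le_add_left _ _

lemma cCount_phi_mono {s : Fin n → Fin m} (t : Tok m n) (φ : Vtx m → ℕ)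
    (hφ : ∀ u v, (TheGraph s).Adj u v →
      φ v ≤ φ u + (if isContrary t u v then 1 else 0)) :
    ∀ (l : List (Vtx m × Vtx m)) (f : Tok m n → Vtx m),
      (∀ e ∈ l, (TheGraph s).Adj e.1 e.2) →
      φ (applySwaps l f t) ≤ φ (f t) + cCount t l f := by
  intro l
  induction l with
  | nil => intro f _; simp [cCount]
  | cons e rest ih =>
      intro f hl
      have he : (TheGraph s).Adj e.1 e.2 := hl e List.mem_cons_self
      have hne : e.1 ≠ e.2 := he.ne
      have hrest : φ (applySwaps rest (fun t' => swapV e (f t')) t) ≤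
          φ (swapV e (f t)) + cCount t rest (fun t' => swapV e (f t')) :=
        ih (fun t' => swapV e (f t')) (fun e' h' => hl e' (List.mem_cons_of_mem _ h'))
      rw [applySwaps_cons]
      show _ ≤ φ (f t) + (((if f t = e.1 ∧ isContrary t e.1 e.2 = true then 1 else 0) +
        (if f t = e.2 ∧ isContrary t e.2 e.1 = true then 1 else 0)) +
        cCount t rest (fun t' => swapV e (f t')))
      by_cases h1 : f t = e.1
      · have hsw : swapV e (f t) = e.2 := by simp [swapV, h1]
        have := hφ e.1 e.2 he
        calc φ (applySwaps rest (fun t' => swapV e (f t')) t)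
            ≤ φ (swapV e (f t)) + cCount t rest (fun t' => swapV e (f t')) := hrest
          _ ≤ _ := by
              rw [hsw]
              have h2 : ¬ (f t = e.2) := by rw [h1]; exact hne
              simp only [h1, h2, true_and, false_and, if_false]
              rcases hc : isContrary t e.1 e.2 with _ | _ <;> simp [hc] at this ⊢ <;> omega
      · by_cases h2 : f t = e.2
        · have hsw : swapV e (f t) = e.1 := by
            simp [swapV, h1, h2]
          have := hφ e.2 e.1 he.symm
          calc φ (applySwaps rest (fun t' => swapV e (f t')) t)
              ≤ φ (swapV e (f t)) + cCount t rest (fun t' => swapV e (f t')) := hrest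
            _ ≤ _ := by
                rw [hsw]
                simp only [h1, h2, true_and, false_and, if_false]
                rcases hc : isContrary t e.2 e.1 with _ | _ <;> simp [hc] at this ⊢ <;> omega
        · have hsw : swapV e (f t) = f t := by simp [swapV, h1, h2]
          have := hrest
          rw [hsw] at this
          simp only [h1, h2, false_and, if_false]
          omega

lemma cCount_phi_anti {s : Fin n → Fin m} (t : Tok m n) (φ : Vtx m → ℕ)
    (hφ : ∀ u v, (TheGraph s).Adj u v →
      φ u ≤ φ v + (if isContrary t u v then 1 else 0)) :
    ∀ (l : List (Vtx m × Vtx m)) (f : Tok m n → Vtx m),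
      (∀ e ∈ l, (TheGraph s).Adj e.1 e.2) →
      φ (f t) ≤ φ (applySwaps l f t) + cCount t l f := by
  intro l
  induction l with
  | nil => intro f _; simp [cCount]
  | cons e rest ih =>
      intro f hl
      have he : (TheGraph s).Adj e.1 e.2 := hl e List.mem_cons_self
      have hne : e.1 ≠ e.2 := he.ne
      have hrest : φ (swapV e (f t)) ≤
          φ (applySwaps rest (fun t' => swapV e (f t')) t) + cCount t rest (fun t' => swapV e (f t')) :=
        ih (fun t' => swapV e (f t')) (fun e' h' => hl e' (List.mem_cons_of_mem _ h'))
      rw [applySwaps_cons]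
      show _ ≤ _ + (((if f t = e.1 ∧ isContrary t e.1 e.2 = true then 1 else 0) +
        (if f t = e.2 ∧ isContrary t e.2 e.1 = true then 1 else 0)) +
        cCount t rest (fun t' => swapV e (f t')))
      by_cases h1 : f t = e.1
      · have hsw : swapV e (f t) = e.2 := by simp [swapV, h1]
        have hstep := hφ e.1 e.2 he
        have h2 : ¬ (f t = e.2) := by rw [h1]; exact hne
        rw [hsw] at hrest
        simp only [h1, h2, true_and, false_and, if_false]
        rcases hc : isContrary t e.1 e.2 with _ | _ <;>
          simp [hc] at hstep ⊢ <;> omega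
      · by_cases h2 : f t = e.2
        · have hsw : swapV e (f t) = e.1 := by simp [swapV, h1, h2]
          have hstep := hφ e.2 e.1 he.symm
          rw [hsw] at hrest
          simp only [h1, h2, true_and, false_and, if_false]
          rcases hc : isContrary t e.2 e.1 with _ | _ <;>
            simp [hc] at hstep ⊢ <;> omega
        · have hsw : swapV e (f t) = f t := by simp [swapV, h1, h2]
          rw [hsw] at hrest
          simp only [h1, h2, false_and, if_false]
          omega

/-- Total number of moves made by token `t`. -/
def mCount (t : Tok m n) : List (Vtx m × Vtx m) → (Tok m n → Vtx m) → ℕ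
  | [], _ => 0
  | e :: rest, f =>
      ((if f t = e.1 then 1 else 0) + (if f t = e.2 then 1 else 0)) +
        mCount t rest (fun t' => swapV e (f t'))

lemma mCount_eq_hgt {s : Fin n → Fin m} (t : Tok m n) (ψ : Vtx m → ℤ)
    (hψ : ∀ u v, (TheGraph s).Adj u v →
      ψ v = ψ u + (if isContrary t u v then 1 else -1)) :
    ∀ (l : List (Vtx m × Vtx m)) (f : Tok m n → Vtx m),
      (∀ e ∈ l, (TheGraph s).Adj e.1 e.2) →
      (mCount t l f : ℤ) + ψ (applySwaps l f t) = 2 * cCount t l f + ψ (f t) := by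
  intro l
  induction l with
  | nil => intro f _; simp [cCount, mCount]
  | cons e rest ih =>
      intro f hl
      have he : (TheGraph s).Adj e.1 e.2 := hl e List.mem_cons_self
      have hne : e.1 ≠ e.2 := he.ne
      have hrest : (mCount t rest (fun t' => swapV e (f t')) : ℤ) +
          ψ (applySwaps rest (fun t' => swapV e (f t')) t) =
          2 * cCount t rest (fun t' => swapV e (f t')) + ψ (swapV e (f t)) :=
        ih (fun t' => swapV e (f t')) (fun e' h' => hl e' (List.mem_cons_of_mem _ h'))
      rw [applySwaps_cons, mCount]
      show (((((if f t = e.1 then 1 else 0) + (if f t = e.2 then 1 else 0)) +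
          mCount t rest (fun t' => swapV e (f t')) : ℕ)) : ℤ) + _ =
        2 * (((if f t = e.1 ∧ isContrary t e.1 e.2 = true then 1 else 0) +
          (if f t = e.2 ∧ isContrary t e.2 e.1 = true then 1 else 0)) +
          cCount t rest (fun t' => swapV e (f t')) : ℕ) + ψ (f t)
      by_cases h1 : f t = e.1
      · have hsw : swapV e (f t) = e.2 := by simp [swapV, h1]
        have hstep := hψ e.1 e.2 he
        have h2 : ¬ (f t = e.2) := by rw [h1]; exact hne
        rw [hsw] at hrest
        simp only [h1, h2, true_and, false_and, if_false, if_true]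
        rcases hc : isContrary t e.1 e.2 with _ | _ <;>
          simp [hc, hne, Ne.symm hne] at hstep ⊢ <;> push_cast at hrest ⊢ <;> omega
      · by_cases h2 : f t = e.2
        · have hsw : swapV e (f t) = e.1 := by simp [swapV, h1, h2]
          have hstep := hψ e.2 e.1 he.symm
          rw [hsw] at hrest
          simp only [h1, h2, true_and, false_and, if_false, if_true]
          rcases hc : isContrary t e.2 e.1 with _ | _ <;>
            simp [hc, hne, Ne.symm hne] at hstep ⊢ <;> push_cast at hrest ⊢ <;> omega
        · have hsw : swapV e (f t) = f t := by simp [swapV, h1, h2]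
          rw [hsw] at hrest
          simp only [h1, h2, false_and, if_false]
          push_cast
          push_cast at hrest
          omega

lemma sum_indicator_le_one {m n : ℕ} (f : Tok m n → Vtx m)
    (hf : Function.Injective f) (x : Vtx m) :
    (∑ t : NonItem m n, if f (Sum.inr t) = x then 1 else 0) ≤ 1 := by
  have heq : (∑ t : NonItem m n, if f (Sum.inr t) = x then 1 else 0) =
      (Finset.univ.filter fun t : NonItem m n => f (Sum.inr t) = x).card :=
    (Finset.card_filter _ _).symm
  rw [heq]
  refine Finset.card_le_one.mpr ?_
  intro a ha b hb
  simp only [Finset.mem_filter] at ha hb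
  exact Sum.inr.inj (hf (ha.2.trans hb.2.symm))

lemma sum_mCount_le {m n : ℕ} (l : List (Vtx m × Vtx m)) (f : Tok m n → Vtx m)
    (hf : Function.Injective f) :
    ∑ t : NonItem m n, mCount (Sum.inr t) l f ≤ 2 * l.length := by
  induction l generalizing f with
  | nil => simp [mCount]
  | cons e rest ih =>
      have hinj2 : Function.Injective (fun t' => swapV e (f t')) :=
        fun a b hab => hf (swapV_injective e hab)
      have hr := ih _ hinj2
      have hsplit : ∑ t : NonItem m n, mCount (Sum.inr t) (e :: rest) f =
          (∑ t : NonItem m n, ((if f (Sum.inr t) = e.1 then 1 else 0) +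
            (if f (Sum.inr t) = e.2 then 1 else 0))) +
          ∑ t : NonItem m n, mCount (Sum.inr t) rest (fun t' => swapV e (f t')) := by
        rw [← Finset.sum_add_distrib]
        rfl
      have h2 : (∑ t : NonItem m n, ((if f (Sum.inr t) = e.1 then 1 else 0) +
            (if f (Sum.inr t) = e.2 then 1 else 0))) ≤ 2 := by
        rw [Finset.sum_add_distrib]
        have ha := sum_indicator_le_one f hf e.1
        have hb := sum_indicator_le_one f hf e.2
        omega
      rw [hsplit]
      simp only [List.length_cons]
      omega

end Aux


section Dist
variable {m n : ℕ} {s : Fin n → Fin m}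

lemma adj_root_slot {i : Fin m} (h : 0 < lenSlot s i) :
    (TheGraph s).Adj Vtx.root (Vtx.slot i 0) :=
  theGraph_adj.mpr ⟨by simp, Or.inl ⟨rfl, h⟩⟩

lemma adj_slot {i : Fin m} {d : ℕ} (h : d + 1 < lenSlot s i) :
    (TheGraph s).Adj (Vtx.slot i d) (Vtx.slot i (d + 1)) :=
  theGraph_adj.mpr ⟨by simp, Or.inl ⟨rfl, rfl, h⟩⟩

lemma adj_root_ord (h : 0 < lenOrd m n) :
    (TheGraph s).Adj Vtx.root (Vtx.ord 0) :=
  theGraph_adj.mpr ⟨by simp, Or.inl ⟨rfl, h⟩⟩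

lemma adj_ord {d : ℕ} (h : d + 1 < lenOrd m n) :
    (TheGraph s).Adj (Vtx.ord d) (Vtx.ord (d + 1)) :=
  theGraph_adj.mpr ⟨by simp, Or.inl ⟨rfl, h⟩⟩

lemma reach_slot (i : Fin m) :
    ∀ d, d < lenSlot s i →
      ∃ p : (TheGraph s).Walk (Vtx.slot i d) Vtx.root, p.length = d + 1 := by
  intro d
  induction d with
  | zero =>
      intro h
      exact ⟨(adj_root_slot (by omega)).symm.toWalk, by simp⟩
  | succ d ih =>
      intro h
      obtain ⟨p, hp⟩ := ih (by omega)
      exact ⟨SimpleGraph.Walk.cons (adj_slot h).symm p, by simp [hp]⟩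

lemma reach_ord :
    ∀ d, d < lenOrd m n →
      ∃ p : (TheGraph s).Walk (Vtx.ord d) Vtx.root, p.length = d + 1 := by
  intro d
  induction d with
  | zero =>
      intro h
      exact ⟨(adj_root_ord (by omega)).symm.toWalk, by simp⟩
  | succ d ih =>
      intro h
      obtain ⟨p, hp⟩ := ih (by omega)
      exact ⟨SimpleGraph.Walk.cons (adj_ord h).symm p, by simp [hp]⟩

lemma hgt_walk_le {u v : Vtx m} (p : (TheGraph s).Walk u v) :
    zhgt (kk m n) u - zhgt (kk m n) v ≤ (p.length : ℤ) ∧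
      zhgt (kk m n) v - zhgt (kk m n) u ≤ (p.length : ℤ) := by
  induction p with
  | nil => simp
  | @cons a b c hadj p ih =>
      have hd := zhgt_adj (s := s) hadj
      have hd' : zhgt (kk m n) b = zhgt (kk m n) a + 1 ∨
          zhgt (kk m n) b = zhgt (kk m n) a - 1 := by
        split at hd <;> omega
      simp only [SimpleGraph.Walk.length_cons]
      push_cast
      omega

lemma dist_slot_ord {i : Fin m} {a b : ℕ} (ha : a < lenSlot s i) (hb : b < lenOrd m n) :
    (TheGraph s).dist (Vtx.slot i a) (Vtx.ord b) = a + b + 2 := by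
  obtain ⟨p1, hp1⟩ := reach_slot i a ha
  obtain ⟨p2, hp2⟩ := reach_ord b hb
  have hw : (p1.append p2.reverse).length = a + b + 2 := by
    simp [hp1, hp2]
    try omega
  have hle : (TheGraph s).dist (Vtx.slot i a) (Vtx.ord b) ≤ a + b + 2 :=
    hw ▸ SimpleGraph.dist_le _
  have hreach : (TheGraph s).Reachable (Vtx.slot i a) (Vtx.ord b) := ⟨p1.append p2.reverse⟩
  obtain ⟨q, hq⟩ := hreach.exists_walk_length_eq_dist
  have h2 := (hgt_walk_le q).1
  rw [hq] at h2
  simp only [zhgt] at h2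
  have : (a : ℤ) + b + 2 ≤ (TheGraph s).dist (Vtx.slot i a) (Vtx.ord b) := by omega
  omega

end Dist

section Ranges
variable {m n : ℕ} {s : Fin n → Fin m}

lemma kk_pos (hm : 0 < m) (hn : 0 < n) : 0 < kk m n :=
  Nat.pow_pos (Nat.mul_pos hm hn)

lemma lenOrd_eq : lenOrd m n = n * (kk m n + m * kk' m n) := by
  unfold lenOrd; ring

lemma lenOrd_pos (hm : 0 < m) (hn : 0 < n) : 0 < lenOrd m n := by
  unfold lenOrd
  have := kk_pos hm hn
  have : 0 < n * kk m n := Nat.mul_pos hn this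
  omega

lemma sum_wt (i : Fin m) :
    ∑ j' : Fin n, (kk' m n + if s j' = i then kk m n else 0) = lenSlot s i := by
  rw [Finset.sum_add_distrib]
  have h1 : ∑ _j' : Fin n, kk' m n = n * kk' m n := by
    simp [Finset.sum_const, Finset.card_univ, mul_comm]
  have h2 : ∑ j' : Fin n, (if s j' = i then kk m n else 0) = cnt s i * kk m n := by
    have : ∀ j' : Fin n, (if s j' = i then kk m n else 0) =
        (if s j' = i then 1 else 0) * kk m n := by
      intro j'; split <;> simp
    rw [Finset.sum_congr rfl fun j' _ => this j', ← Finset.sum_mul]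
    congr 1
    exact (Finset.card_filter _ _).symm
  rw [h1, h2]
  unfold lenSlot
  ring

lemma offQ_add_le (i : Fin m) (j : Fin n) :
    offQ s i j + (kk' m n + if s j = i then kk m n else 0) ≤ lenSlot s i := by
  rw [← sum_wt (s := s) i]
  have hnotmem : j ∉ Finset.univ.filter (fun j' : Fin n => j'.val < j.val) := by
    simp
  have hsub : insert j (Finset.univ.filter (fun j' : Fin n => j'.val < j.val)) ⊆
      Finset.univ := Finset.subset_univ _
  calc offQ s i j + (kk' m n + if s j = i then kk m n else 0)
      = ∑ j' ∈ insert j (Finset.univ.filter (fun j' : Fin n => j'.val < j.val)),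
          (kk' m n + if s j' = i then kk m n else 0) := by
        rw [Finset.sum_insert hnotmem, offQ]; ring
    _ ≤ _ := Finset.sum_le_sum_of_subset hsub

lemma tOffP_add_le (i : Fin m) (j : Fin n) :
    tOffP s i j + (kk' m n + if s j = i then kk m n else 0) ≤ lenSlot s i := by
  rw [← sum_wt (s := s) i]
  have hnotmem : j ∉ Finset.univ.filter (fun j' : Fin n => j.val < j'.val) := by
    simp
  calc tOffP s i j + (kk' m n + if s j = i then kk m n else 0)
      = ∑ j' ∈ insert j (Finset.univ.filter (fun j' : Fin n => j.val < j'.val)),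
          (kk' m n + if s j' = i then kk m n else 0) := by
        rw [Finset.sum_insert hnotmem, tOffP]; ring
    _ ≤ _ := Finset.sum_le_sum_of_subset (Finset.subset_univ _)

lemma offQ_window {i : Fin m} {j j' : Fin n} (h : j.val < j'.val) :
    offQ s i j + (kk' m n + if s j = i then kk m n else 0) ≤ offQ s i j' := by
  have hnotmem : j ∉ Finset.univ.filter (fun j'' : Fin n => j''.val < j.val) := by
    simp
  have hsub : insert j (Finset.univ.filter (fun j'' : Fin n => j''.val < j.val)) ⊆
      Finset.univ.filter (fun j'' : Fin n => j''.val < j'.val) := by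
    intro x hx
    simp only [Finset.mem_insert, Finset.mem_filter, Finset.mem_univ, true_and] at hx ⊢
    rcases hx with rfl | hx
    · exact h
    · omega
  calc offQ s i j + (kk' m n + if s j = i then kk m n else 0)
      = ∑ j'' ∈ insert j (Finset.univ.filter (fun j'' : Fin n => j''.val < j.val)),
          (kk' m n + if s j'' = i then kk m n else 0) := by
        rw [Finset.sum_insert hnotmem, offQ]; ring
    _ ≤ _ := Finset.sum_le_sum_of_subset hsub

lemma rho_lt (hm : 1 < m) (i : Fin m) (j : Fin n) : rho s i j < m := by
  unfold rho
  split
  · omega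
  · split
    · omega
    · rename_i h1 h2
      have hsub : (Finset.univ.filter fun i' : Fin m =>
          i'.val < i.val ∧ i' ≠ s j ∧ some i' ≠ nxt s j) ⊆
          (Finset.univ.erase i).erase (s j) := by
        intro x hx
        simp only [Finset.mem_filter, Finset.mem_univ, true_and, Finset.mem_erase] at hx ⊢
        exact ⟨hx.2.1, fun hxi => by omega, trivial⟩
      have hcard : ((Finset.univ.erase i).erase (s j)).card = m - 2 := by
        rw [Finset.card_erase_of_mem, Finset.card_erase_of_mem (Finset.mem_univ i)]
        · simp only [Finset.card_univ, Fintype.card_fin]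
          omega
        · exact Finset.mem_erase.mpr ⟨fun hh => h2 hh.symm, Finset.mem_univ _⟩
      have := Finset.card_le_card hsub
      rw [hcard] at this
      split <;> omega

lemma xpos_lt (j : Fin n) (a : Fin (kk m n)) :
    j.val * (kk m n + m * kk' m n) + a.val < lenOrd m n := by
  rw [lenOrd_eq]
  have h1 : j.val * (kk m n + m * kk' m n) + a.val <
      (j.val + 1) * (kk m n + m * kk' m n) := by
    have := a.isLt
    nlinarith [Nat.zero_le (m * kk' m n)]
  have h2 : (j.val + 1) * (kk m n + m * kk' m n) ≤ n * (kk m n + m * kk' m n) :=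
    Nat.mul_le_mul_right _ j.isLt
  omega

lemma ppos_lt (hm : 1 < m) (i : Fin m) (j : Fin n) (a : Fin (kk' m n)) :
    j.val * (kk m n + m * kk' m n) + kk m n + rho s i j * kk' m n + a.val
      < lenOrd m n := by
  rw [lenOrd_eq]
  have hrho : rho s i j < m := rho_lt hm i j
  have h0 : rho s i j * kk' m n + a.val < m * kk' m n := by
    have := a.isLt
    have h' : (rho s i j + 1) * kk' m n ≤ m * kk' m n := Nat.mul_le_mul_right _ hrho
    nlinarith
  have h1 : j.val * (kk m n + m * kk' m n) + kk m n + rho s i j * kk' m n + a.val <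
      (j.val + 1) * (kk m n + m * kk' m n) := by nlinarith
  have h2 : (j.val + 1) * (kk m n + m * kk' m n) ≤ n * (kk m n + m * kk' m n) :=
    Nat.mul_le_mul_right _ j.isLt
  omega

end Ranges


section Global
variable {m n : ℕ} {s : Fin n → Fin m}

lemma psi_step_pos (t : Tok m n)
    (ht : ∀ u v : Vtx m, isContrary t u v = !isLeftMove u v) :
    ∀ u v : Vtx m, (TheGraph s).Adj u v →
      zhgt (kk m n) v = zhgt (kk m n) u + (if isContrary t u v then 1 else -1) := by
  intro u v h
  have hz := zhgt_adj (s := s) h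
  rw [ht]
  cases hL : isLeftMove u v <;> simp [hL] at hz ⊢ <;> omega

lemma psi_step_neg (t : Tok m n)
    (ht : ∀ u v : Vtx m, isContrary t u v = isLeftMove u v) :
    ∀ u v : Vtx m, (TheGraph s).Adj u v →
      (fun w => -zhgt (kk m n) w) v =
        (fun w => -zhgt (kk m n) w) u + (if isContrary t u v then 1 else -1) := by
  intro u v h
  have hz := zhgt_adj (s := s) h
  rw [ht]
  cases hL : isLeftMove u v <;> simp [hL] at hz ⊢ <;> omega

lemma mCount_split (π : Equiv.Perm (Option (Fin m)))
    (σ : List (Vtx m × Vtx m))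
    (hedges : ∀ e ∈ σ, (TheGraph s).Adj e.1 e.2)
    (hsol : applySwaps σ (initTok s) = tgtTok s π)
    (hm : 1 < m) (hn : 1 < n) (t : NonItem m n) :
    (mCount (Sum.inr t) σ (initTok s) : ℤ) =
      2 * cCount (Sum.inr t) σ (initTok s) + dd s π (Sum.inr t) := by
  have hm0 : 0 < m := by omega
  have hn0 : 0 < n := by omega
  have hlo : 0 < lenOrd m n := lenOrd_pos hm0 hn0
  rcases t with ⟨j, a⟩ | ⟨j, a⟩ | ⟨i, j, a⟩ | ⟨i, j, a⟩
  · -- x tokens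
    have hinit : initTok s (Sum.inr (Sum.inl (j, a))) =
        Vtx.ord (j.val * (kk m n + m * kk' m n) + a.val) := rfl
    have htgt : tgtTok s π (Sum.inr (Sum.inl (j, a))) =
        Vtx.slot (s j) (tOffP s (s j) j + kk' m n + (kk m n - 1 - a.val)) := rfl
    have h := mCount_eq_hgt (s := s) (Sum.inr (Sum.inl (j, a)))
      (fun w => -zhgt (kk m n) w) (psi_step_neg _ (fun u v => rfl)) σ (initTok s) hedges
    rw [hsol, hinit, htgt] at h
    simp only [zhgt] at h
    have hX : j.val * (kk m n + m * kk' m n) + a.val < lenOrd m n := xpos_lt j a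
    have hA : tOffP s (s j) j + kk' m n + (kk m n - 1 - a.val) < lenSlot s (s j) := by
      have h1 := tOffP_add_le (s := s) (s j) j
      rw [if_pos rfl] at h1
      have := a.isLt
      omega
    unfold dd
    rw [hinit, htgt, SimpleGraph.dist_comm, dist_slot_ord hA hX]
    push_cast at h ⊢
    omega
  · -- y tokens
    have hinit : initTok s (Sum.inr (Sum.inr (Sum.inl (j, a)))) =
        Vtx.slot (s j) (offQ s (s j) j + a.val) := rfl
    have htgt : tgtTok s π (Sum.inr (Sum.inr (Sum.inl (j, a)))) =
        Vtx.ord (lenOrd m n - 1 - (j.val * (kk m n + m * kk' m n) + a.val)) := rfl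
    have h := mCount_eq_hgt (s := s) (Sum.inr (Sum.inr (Sum.inl (j, a))))
      (zhgt (kk m n)) (psi_step_pos _ (fun u v => rfl)) σ (initTok s) hedges
    rw [hsol, hinit, htgt] at h
    simp only [zhgt] at h
    have hA : offQ s (s j) j + a.val < lenSlot s (s j) := by
      have h1 := offQ_add_le (s := s) (s j) j
      rw [if_pos rfl] at h1
      have := a.isLt
      omega
    have hB : lenOrd m n - 1 - (j.val * (kk m n + m * kk' m n) + a.val) < lenOrd m n := by
      omega
    unfold dd
    rw [hinit, htgt, dist_slot_ord hA hB]
    push_cast at h ⊢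
    omega
  · -- p tokens
    have hinit : initTok s (Sum.inr (Sum.inr (Sum.inr (Sum.inl (i, j, a))))) =
        Vtx.ord (j.val * (kk m n + m * kk' m n) + kk m n + rho s i j * kk' m n + a.val) := rfl
    have htgt : tgtTok s π (Sum.inr (Sum.inr (Sum.inr (Sum.inl (i, j, a))))) =
        Vtx.slot i (tOffP s i j + (kk' m n - 1 - a.val)) := rfl
    have h := mCount_eq_hgt (s := s) (Sum.inr (Sum.inr (Sum.inr (Sum.inl (i, j, a)))))
      (fun w => -zhgt (kk m n) w) (psi_step_neg _ (fun u v => rfl)) σ (initTok s) hedges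
    rw [hsol, hinit, htgt] at h
    simp only [zhgt] at h
    have hX : j.val * (kk m n + m * kk' m n) + kk m n + rho s i j * kk' m n + a.val
        < lenOrd m n := ppos_lt hm i j a
    have hA : tOffP s i j + (kk' m n - 1 - a.val) < lenSlot s i := by
      have h1 := tOffP_add_le (s := s) i j
      have := a.isLt
      omega
    unfold dd
    rw [hinit, htgt, SimpleGraph.dist_comm, dist_slot_ord hA hX]
    push_cast at h ⊢
    omega
  · -- q tokens
    have hinit : initTok s (Sum.inr (Sum.inr (Sum.inr (Sum.inr (i, j, a))))) =
        Vtx.slot i (offQ s i j + (if s j = i then kk m n else 0) + a.val) := rfl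
    have htgt : tgtTok s π (Sum.inr (Sum.inr (Sum.inr (Sum.inr (i, j, a))))) =
        Vtx.ord (lenOrd m n - 1 -
          (j.val * (kk m n + m * kk' m n) + kk m n + rho s i j * kk' m n + a.val)) := rfl
    have h := mCount_eq_hgt (s := s) (Sum.inr (Sum.inr (Sum.inr (Sum.inr (i, j, a)))))
      (zhgt (kk m n)) (psi_step_pos _ (fun u v => rfl)) σ (initTok s) hedges
    rw [hsol, hinit, htgt] at h
    simp only [zhgt] at h
    have hA : offQ s i j + (if s j = i then kk m n else 0) + a.val < lenSlot s i := by
      have h1 := offQ_add_le (s := s) i j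
      have := a.isLt
      omega
    have hB : lenOrd m n - 1 -
        (j.val * (kk m n + m * kk' m n) + kk m n + rho s i j * kk' m n + a.val)
        < lenOrd m n := by omega
    unfold dd
    rw [hinit, htgt, dist_slot_ord hA hB]
    push_cast at h ⊢
    omega

lemma card_NonItem : Fintype.card (NonItem m n) = 2*(n*kk m n) + 2*(m*(n*kk' m n)) := by
  simp only [NonItem, Fintype.card_sum, Fintype.card_prod, Fintype.card_fin]
  ring

lemma global_bound (hm : 1 < m) (hn : 1 < n) (π : Equiv.Perm (Option (Fin m)))
    (σ : List (Vtx m × Vtx m))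
    (hinj : Function.Injective (initTok s))
    (hedges : ∀ e ∈ σ, (TheGraph s).Adj e.1 e.2)
    (hsol : applySwaps σ (initTok s) = tgtTok s π)
    (hlen : 2 * σ.length ≤ (∑ t : NonItem m n, (dd s π (Sum.inr t) + 1)) + 2 * n) :
    2 * ∑ t : NonItem m n, cCount (Sum.inr t) σ (initTok s) ≤
      2*(n*kk m n) + 2*(m*(n*kk' m n)) + 2*n := by
  have hsum : (∑ t : NonItem m n, (mCount (Sum.inr t) σ (initTok s) : ℤ)) =
      2 * (∑ t : NonItem m n, (cCount (Sum.inr t) σ (initTok s) : ℤ)) +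
      ∑ t : NonItem m n, (dd s π (Sum.inr t) : ℤ) := by
    rw [Finset.mul_sum, ← Finset.sum_add_distrib]
    exact Finset.sum_congr rfl fun t _ => mCount_split π σ hedges hsol hm hn t
  have hle := sum_mCount_le σ (initTok s) hinj
  have hcardsum : (∑ t : NonItem m n, (dd s π (Sum.inr t) + 1)) =
      (∑ t : NonItem m n, dd s π (Sum.inr t)) + (2*(n*kk m n) + 2*(m*(n*kk' m n))) := by
    rw [Finset.sum_add_distrib, Finset.sum_const, Finset.card_univ, card_NonItem]
    simp [mul_comm]
  rw [hcardsum] at hlen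
  -- cast everything to ℤ
  have hle' : (∑ t : NonItem m n, (mCount (Sum.inr t) σ (initTok s) : ℤ)) ≤
      2 * σ.length := by exact_mod_cast hle
  have hlen' : (2 * σ.length : ℤ) ≤
      (∑ t : NonItem m n, (dd s π (Sum.inr t) : ℤ)) +
      (2*(n*kk m n) + 2*(m*(n*kk' m n))) + 2*n := by exact_mod_cast hlen
  have : 2 * (∑ t : NonItem m n, (cCount (Sum.inr t) σ (initTok s) : ℤ)) ≤
      2*(n*kk m n) + 2*(m*(n*kk' m n)) + 2*n := by omega
  exact_mod_cast this

lemma numeric_bound (hm : 1 < m) (hn : 1 < n) :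
    2*(n*kk m n) + 2*(m*(n*kk' m n)) + 2*n ≤ (m*n)^27 := by
  have hk : 0 < kk m n := kk_pos (by omega) (by omega)
  have hk' : kk' m n ≤ kk m n := Nat.div_le_self _ _
  have h27 : (m*n)^27 = (m*n)^2 * kk m n := by rw [kk, ← pow_add]
  have hmn : 2*n + 2*(m*n) + 2*n ≤ (m*n)^2 := by
    have h1 : 2*2 ≤ m*n := Nat.mul_le_mul hm hn
    have h2 : (m*n)^2 = (m*n)*(m*n) := sq (m*n) ▸ rfl
    have h3 : 2*n ≤ m*n := Nat.mul_le_mul_right n hm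
    nlinarith
  calc 2*(n*kk m n) + 2*(m*(n*kk' m n)) + 2*n
      ≤ 2*(n*kk m n) + 2*(m*(n*kk m n)) + 2*(n*kk m n) := by
        have h1 : m*(n*kk' m n) ≤ m*(n*kk m n) :=
          Nat.mul_le_mul_left _ (Nat.mul_le_mul_left _ hk')
        have h2 : n ≤ n * kk m n := Nat.le_mul_of_pos_right _ hk
        omega
    _ = (2*n + 2*(m*n) + 2*n) * kk m n := by ring
    _ ≤ (m*n)^2 * kk m n := Nat.mul_le_mul_right _ hmn
    _ = (m*n)^27 := h27.symm

end Global


section Inj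
variable {m n : ℕ} {s : Fin n → Fin m}

lemma nxt_ne_sj (hcons : ∀ (j : Fin n) (h : j.val + 1 < n), s j ≠ s ⟨j.val + 1, h⟩)
    (j : Fin n) : nxt s j ≠ some (s j) := by
  unfold nxt
  split
  · rename_i hlt
    intro hc
    exact hcons j hlt (Option.some_injective _ hc).symm
  · simp

lemma rho3_key (hm : 1 < m)
    (hcons : ∀ (j : Fin n) (h : j.val + 1 < n), s j ≠ s ⟨j.val + 1, h⟩)
    (j : Fin n) (i₁ : Fin m) (hn1 : ¬ (some i₁ = nxt s j)) (hn2 : ¬ (i₁ = s j)) :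
    (if (nxt s j).isSome then 1 else 0) +
      (Finset.univ.filter fun i'' : Fin m =>
        i''.val < i₁.val ∧ i'' ≠ s j ∧ some i'' ≠ nxt s j).card ≤ m - 2 := by
  have hnxt : nxt s j ≠ some (s j) := nxt_ne_sj hcons j
  rcases hs : nxt s j with _ | i₀
  · have hsub : (Finset.univ.filter fun i'' : Fin m =>
        i''.val < i₁.val ∧ i'' ≠ s j ∧ some i'' ≠ nxt s j) ⊆
        (Finset.univ.erase i₁).erase (s j) := by
      intro x hx
      simp only [Finset.mem_filter, Finset.mem_univ, true_and, Finset.mem_erase] at hx ⊢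
      exact ⟨hx.2.1, fun hc => by omega, trivial⟩
    have hcard : ((Finset.univ.erase i₁).erase (s j)).card = m - 2 := by
      rw [Finset.card_erase_of_mem, Finset.card_erase_of_mem (Finset.mem_univ i₁)]
      · simp only [Finset.card_univ, Fintype.card_fin]; omega
      · exact Finset.mem_erase.mpr ⟨fun hh => hn2 hh.symm, Finset.mem_univ _⟩
    have h5 := Finset.card_le_card hsub
    rw [hcard] at h5
    rw [hs] at h5
    have hz : (if (none : Option (Fin m)).isSome = true then 1 else 0) = 0 := rfl
    omega
  · have hi0j : i₀ ≠ s j := fun hc => hnxt (by rw [hs, hc])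
    have hi0i : i₀ ≠ i₁ := fun hc => hn1 (by rw [hc] at hs; exact hs.symm)
    have hsub : (Finset.univ.filter fun i'' : Fin m =>
        i''.val < i₁.val ∧ i'' ≠ s j ∧ some i'' ≠ nxt s j) ⊆
        (((Finset.univ.erase i₁).erase (s j)).erase i₀) := by
      intro x hx
      simp only [Finset.mem_filter, Finset.mem_univ, true_and, Finset.mem_erase] at hx ⊢
      refine ⟨fun hc => hx.2.2 (by rw [hc, hs]), hx.2.1, fun hc => by subst hc; omega, trivial⟩
    have hmem : i₀ ∈ (Finset.univ.erase i₁).erase (s j) :=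
      Finset.mem_erase.mpr ⟨hi0j, Finset.mem_erase.mpr ⟨hi0i, Finset.mem_univ _⟩⟩
    have hcard2 : ((Finset.univ.erase i₁).erase (s j)).card = m - 2 := by
      rw [Finset.card_erase_of_mem, Finset.card_erase_of_mem (Finset.mem_univ i₁)]
      · simp only [Finset.card_univ, Fintype.card_fin]; omega
      · exact Finset.mem_erase.mpr ⟨fun hh => hn2 hh.symm, Finset.mem_univ _⟩
    have hcard3 : (((Finset.univ.erase i₁).erase (s j)).erase i₀).card = m - 2 - 1 := by
      rw [Finset.card_erase_of_mem hmem, hcard2]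
    have hm3 : 3 ≤ m := by
      have hc3 : ({i₁, s j, i₀} : Finset (Fin m)).card = 3 := by
        rw [Finset.card_insert_of_notMem, Finset.card_insert_of_notMem, Finset.card_singleton]
        · simp only [Finset.mem_singleton]
          exact hi0j.symm
        · simp only [Finset.mem_insert, Finset.mem_singleton]
          push_neg
          exact ⟨hn2, fun hh => hi0i hh.symm⟩
      have h6 := Finset.card_le_univ ({i₁, s j, i₀} : Finset (Fin m))
      rw [hc3] at h6
      simpa using h6
    have h5 := Finset.card_le_card hsub
    rw [hcard3] at h5
    rw [hs] at h5
    have hz : (if (some i₀).isSome = true then 1 else 0) = 1 := rfl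
    omega

lemma rho3_mono (j : Fin n) {i₁ i₂ : Fin m} (hlt : i₁.val < i₂.val)
    (hne2 : ¬ (i₁ = s j)) (hne1 : ¬ (some i₁ = nxt s j)) :
    (Finset.univ.filter fun i'' : Fin m =>
        i''.val < i₁.val ∧ i'' ≠ s j ∧ some i'' ≠ nxt s j).card <
    (Finset.univ.filter fun i'' : Fin m =>
        i''.val < i₂.val ∧ i'' ≠ s j ∧ some i'' ≠ nxt s j).card := by
  have hmem : i₁ ∉ (Finset.univ.filter fun i'' : Fin m =>
      i''.val < i₁.val ∧ i'' ≠ s j ∧ some i'' ≠ nxt s j) := by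
    simp
  have hsub : insert i₁ (Finset.univ.filter fun i'' : Fin m =>
      i''.val < i₁.val ∧ i'' ≠ s j ∧ some i'' ≠ nxt s j) ⊆
      (Finset.univ.filter fun i'' : Fin m =>
        i''.val < i₂.val ∧ i'' ≠ s j ∧ some i'' ≠ nxt s j) := by
    intro x hx
    simp only [Finset.mem_insert, Finset.mem_filter, Finset.mem_univ, true_and] at hx ⊢
    rcases hx with rfl | hx
    · exact ⟨hlt, hne2, hne1⟩
    · exact ⟨by omega, hx.2⟩
  calc (Finset.univ.filter fun i'' : Fin m =>
        i''.val < i₁.val ∧ i'' ≠ s j ∧ some i'' ≠ nxt s j).card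
      < (insert i₁ (Finset.univ.filter fun i'' : Fin m =>
          i''.val < i₁.val ∧ i'' ≠ s j ∧ some i'' ≠ nxt s j)).card := by
        rw [Finset.card_insert_of_notMem hmem]; omega
    _ ≤ _ := Finset.card_le_card hsub

lemma rho_inj (hm : 1 < m)
    (hcons : ∀ (j : Fin n) (h : j.val + 1 < n), s j ≠ s ⟨j.val + 1, h⟩)
    (j : Fin n) {i i' : Fin m} (h : rho s i j = rho s i' j) : i = i' := by
  unfold rho at h
  by_cases c1 : some i = nxt s j <;> by_cases c1' : some i' = nxt s j
  · exact Option.some_injective _ (c1.trans c1'.symm)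
  · rw [if_pos c1, if_neg c1'] at h
    by_cases c2' : i' = s j
    · rw [if_pos c2'] at h
      omega
    · rw [if_neg c2'] at h
      have hsome : (nxt s j).isSome = true := by rw [← c1]; rfl
      rw [hsome, if_pos rfl] at h
      omega
  · rw [if_neg c1, if_pos c1'] at h
    by_cases c2 : i = s j
    · rw [if_pos c2] at h
      omega
    · rw [if_neg c2] at h
      have hsome : (nxt s j).isSome = true := by rw [← c1']; rfl
      rw [hsome, if_pos rfl] at h
      omega
  · rw [if_neg c1, if_neg c1'] at h
    by_cases c2 : i = s j <;> by_cases c2' : i' = s j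
    · rw [c2, c2']
    · rw [if_pos c2, if_neg c2'] at h
      have := rho3_key hm hcons j i' c1' c2'
      omega
    · rw [if_neg c2, if_pos c2'] at h
      have := rho3_key hm hcons j i c1 c2
      omega
    · rw [if_neg c2, if_neg c2'] at h
      rcases lt_trichotomy i.val i'.val with hlt | heq | hlt
      · have := rho3_mono (s := s) j hlt c2 c1
        omega
      · exact Fin.ext heq
      · have := rho3_mono (s := s) j hlt c2' c1'
        omega

lemma block_uniq {B j j' r r' : ℕ} (hr : r < B) (hr' : r' < B)
    (hj : j ≠ j') (h : j * B + r = j' * B + r') : False := by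
  rcases Nat.lt_or_ge j j' with hlt | hge
  · have h2 : (j + 1) * B ≤ j' * B := Nat.mul_le_mul_right _ (by omega)
    have h3 : (j + 1) * B = j * B + B := Nat.succ_mul j B
    omega
  · have hlt : j' < j := by omega
    have h2 : (j' + 1) * B ≤ j * B := Nat.mul_le_mul_right _ (by omega)
    have h3 : (j' + 1) * B = j' * B + B := Nat.succ_mul j' B
    omega

lemma window_uniq {i : Fin m} {j j' : Fin n} {x : ℕ}
    (h1 : offQ s i j ≤ x)
    (h2 : x < offQ s i j + (kk' m n + if s j = i then kk m n else 0))
    (h1' : offQ s i j' ≤ x)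
    (h2' : x < offQ s i j' + (kk' m n + if s j' = i then kk m n else 0)) :
    j = j' := by
  rcases lt_trichotomy j.val j'.val with hlt | heq | hlt
  · have := offQ_window (s := s) (i := i) (j := j) (j' := j') hlt
    omega
  · exact Fin.ext heq
  · have := offQ_window (s := s) (i := i) (j := j') (j' := j) hlt
    omega

lemma prho_lt (hm : 1 < m) (i : Fin m) (j : Fin n) (a : Fin (kk' m n)) :
    kk m n + rho s i j * kk' m n + a.val < kk m n + m * kk' m n := by
  have h' : (rho s i j + 1) * kk' m n ≤ m * kk' m n :=
    Nat.mul_le_mul_right _ (rho_lt hm i j)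
  have h'' : (rho s i j + 1) * kk' m n = rho s i j * kk' m n + kk' m n :=
    Nat.succ_mul _ _
  have := a.isLt
  omega

lemma initTok_injective (hm : 1 < m)
    (hcons : ∀ (j : Fin n) (h : j.val + 1 < n), s j ≠ s ⟨j.val + 1, h⟩) :
    Function.Injective (initTok s) := by
  intro t t' h
  rcases t with (_ | i0) | ⟨j, a⟩ | ⟨j, a⟩ | ⟨i, j, a⟩ | ⟨i, j, a⟩ <;>
    rcases t' with (_ | i0') | ⟨j', a'⟩ | ⟨j', a'⟩ | ⟨i', j', a'⟩ | ⟨i', j', a'⟩ <;>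
    simp only [initTok, Vtx.ord.injEq, Vtx.slot.injEq, Vtx.nook.injEq, reduceCtorEq] at h
  -- (none, none)
  · rfl
  -- (some, some)
  · rw [h]
  -- (x, x)
  · have hjj : j.val = j'.val := by
      by_contra hne
      exact block_uniq (B := kk m n + m * kk' m n)
        (lt_of_lt_of_le a.isLt (Nat.le_add_right _ _))
        (lt_of_lt_of_le a'.isLt (Nat.le_add_right _ _)) hne h
    rw [hjj] at h
    have haa : a.val = a'.val := by omega
    rw [Fin.ext hjj, Fin.ext haa]
  -- (x, p)
  · exfalso
    have hr' := prho_lt (s := s) hm i' j' a'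
    by_cases hjj : j.val = j'.val
    · rw [hjj] at h
      have := a.isLt
      omega
    · exact block_uniq (B := kk m n + m * kk' m n)
        (lt_of_lt_of_le a.isLt (Nat.le_add_right _ _)) hr' hjj
        (by omega)
  -- (y, y)
  · obtain ⟨hsj, hx⟩ := h
    rw [← hsj] at hx
    have hif : (if s j = s j then kk m n else 0) = kk m n := if_pos rfl
    have hif' : (if s j' = s j then kk m n else 0) = kk m n := if_pos hsj.symm
    have hjj : j = j' := by
      refine window_uniq (s := s) (i := s j) (x := offQ s (s j) j + a.val)
        (Nat.le_add_right _ _) ?_ ?_ ?_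
      · have := a.isLt; omega
      · omega
      · have := a'.isLt; omega
    subst hjj
    have haa : a.val = a'.val := by omega
    rw [Fin.ext haa]
  -- (y, q)
  · exfalso
    obtain ⟨hsj, hx⟩ := h
    subst hsj
    have hif : (if s j = s j then kk m n else 0) = kk m n := if_pos rfl
    have hjj : j = j' := by
      refine window_uniq (s := s) (i := s j) (x := offQ s (s j) j + a.val)
        (Nat.le_add_right _ _) ?_ ?_ ?_
      · have := a.isLt; omega
      · omega
      · have := a'.isLt; omega
    subst hjj
    have := a.isLt
    have := a'.isLt
    omega
  -- (p, x)
  · exfalso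
    have hr := prho_lt (s := s) hm i j a
    by_cases hjj : j.val = j'.val
    · rw [hjj] at h
      have := a'.isLt
      omega
    · exact block_uniq (B := kk m n + m * kk' m n) hr
        (lt_of_lt_of_le a'.isLt (Nat.le_add_right _ _)) hjj
        (by omega)
  -- (p, p)
  · have hr := prho_lt (s := s) hm i j a
    have hr' := prho_lt (s := s) hm i' j' a'
    have hjj : j.val = j'.val := by
      by_contra hne
      exact block_uniq (B := kk m n + m * kk' m n) hr hr' hne (by omega)
    have hj2 : j = j' := Fin.ext hjj
    subst hj2
    rw [show j.val * (kk m n + m * kk' m n) = j.val * (kk m n + m * kk' m n) from rfl] at h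
    have hrr : rho s i j = rho s i' j := by
      by_contra hne
      exact block_uniq (B := kk' m n) a.isLt a'.isLt hne (by omega)
    have hii : i = i' := rho_inj hm hcons j hrr
    subst hii
    have haa : a.val = a'.val := by
      rw [hrr] at h
      omega
    rw [Fin.ext haa]
  -- (q, y)
  · exfalso
    obtain ⟨hsj, hx⟩ := h
    subst hsj
    have hif : (if s j' = s j' then kk m n else 0) = kk m n := if_pos rfl
    have hjj : j = j' := by
      refine window_uniq (s := s) (i := s j') (x := offQ s (s j') j +
          (if s j = s j' then kk m n else 0) + a.val) ?_ ?_ ?_ ?_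
      · omega
      · have := a.isLt; omega
      · omega
      · have := a'.isLt; omega
    subst hjj
    have := a.isLt
    have := a'.isLt
    omega
  -- (q, q)
  · obtain ⟨hii, hx⟩ := h
    subst hii
    have hjj : j = j' := by
      refine window_uniq (s := s) (i := i) (x := offQ s i j +
          (if s j = i then kk m n else 0) + a.val) ?_ ?_ ?_ ?_
      · omega
      · have := a.isLt; omega
      · omega
      · have := a'.isLt; omega
    subst hjj
    have haa : a.val = a'.val := by omega
    rw [Fin.ext haa]

end Inj


section Escape
variable {m n : ℕ} {s : Fin n → Fin m}

lemma bool_not_eq_false {b : Bool} (h : ¬ b = true) : b = false := by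
  cases b <;> simp_all

lemma isContrary_of_slot {t : Tok m n} (ht : isSlotTok t) :
    ∀ u v : Vtx m, isContrary t u v = !isLeftMove u v := by
  rcases t with o | ⟨j, a⟩ | ⟨j, a⟩ | ⟨i, j, a⟩ | ⟨i, j, a⟩
  · intro u v; rfl
  · exact absurd ht (fun h => h)
  · intro u v; rfl
  · exact absurd ht (fun h => h)
  · intro u v; rfl

lemma isContrary_of_nonslot {t : Tok m n} (ht : isNonSlotTok t) :
    ∀ u v : Vtx m, isContrary t u v = isLeftMove u v := by
  rcases t with o | ⟨j, a⟩ | ⟨j, a⟩ | ⟨i, j, a⟩ | ⟨i, j, a⟩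
  · exact absurd ht (fun h => h)
  · intro u v; rfl
  · exact absurd ht (fun h => h)
  · intro u v; rfl
  · exact absurd ht (fun h => h)

/-- Step bound for slot tokens in a slot gadget (entering is contrary). -/
lemma step_slot_some (i : Fin m) (t : Tok m n)
    (ht : ∀ u v : Vtx m, isContrary t u v = !isLeftMove u v) :
    ∀ u v, (TheGraph s).Adj u v →
      zphi (kk m n) (some i) v ≤ zphi (kk m n) (some i) u +
        (if isContrary t u v then 1 else 0) := by
  intro u v h
  rw [ht]
  by_cases hL : isLeftMove u v = true
  · rw [hL]
    simpa using zphi_left_slot h hL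
  · rw [bool_not_eq_false hL]
    simpa using zphi_lip (s := s) (some i) h

/-- Step bound for non-slot tokens in the ordering gadget (entering is contrary). -/
lemma step_nonslot_none (t : Tok m n)
    (ht : ∀ u v : Vtx m, isContrary t u v = isLeftMove u v) :
    ∀ u v, (TheGraph s).Adj u v →
      zphi (kk m n) (none : Option (Fin m)) v ≤ zphi (kk m n) none u +
        (if isContrary t u v then 1 else 0) := by
  intro u v h
  rw [ht]
  by_cases hL : isLeftMove u v = true
  · rw [hL]
    simpa using zphi_lip (s := s) none h
  · rw [bool_not_eq_false hL]
    simpa using zphi_right_ord h (bool_not_eq_false hL)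

/-- Step bound for slot tokens in the ordering gadget (leaving is contrary). -/
lemma step_slot_none (t : Tok m n)
    (ht : ∀ u v : Vtx m, isContrary t u v = !isLeftMove u v) :
    ∀ u v, (TheGraph s).Adj u v →
      zphi (kk m n) (none : Option (Fin m)) u ≤ zphi (kk m n) none v +
        (if isContrary t u v then 1 else 0) := by
  intro u v h
  rw [ht]
  by_cases hL : isLeftMove u v = true
  · rw [hL]
    have hflip : isLeftMove v u = false := by
      rw [isLeftMove_flip h, hL]; rfl
    simpa using zphi_right_ord h.symm hflip
  · rw [bool_not_eq_false hL]
    simpa using zphi_lip (s := s) none h.symm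

/-- Step bound for non-slot tokens in a slot gadget (leaving is contrary). -/
lemma step_nonslot_some (i : Fin m) (t : Tok m n)
    (ht : ∀ u v : Vtx m, isContrary t u v = isLeftMove u v) :
    ∀ u v, (TheGraph s).Adj u v →
      zphi (kk m n) (some i) u ≤ zphi (kk m n) (some i) v +
        (if isContrary t u v then 1 else 0) := by
  intro u v h
  rw [ht]
  by_cases hL : isLeftMove u v = true
  · rw [hL]
    simpa using zphi_lip (s := s) (some i) h.symm
  · rw [bool_not_eq_false hL]
    have hflip : isLeftMove v u = true := by
      rw [isLeftMove_flip h, bool_not_eq_false hL]; rfl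
    simpa using zphi_left_slot h.symm hflip

lemma c_interval_mono (σ : List (Vtx m × Vtx m))
    (hedges : ∀ e ∈ σ, (TheGraph s).Adj e.1 e.2) (t : Tok m n) (φ : Vtx m → ℕ)
    (hφ : ∀ u v, (TheGraph s).Adj u v → φ v ≤ φ u + (if isContrary t u v then 1 else 0))
    {a b : ℕ} (hab : a ≤ b) (f : Tok m n → Vtx m) :
    φ (placeAt σ f b t) ≤ φ (placeAt σ f a t) + cCount t σ f := by
  have hsub : ∀ e ∈ (σ.take b).drop a, (TheGraph s).Adj e.1 e.2 :=
    fun e he => hedges e (List.take_subset b σ (List.drop_subset _ _ he))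
  have h1 := cCount_phi_mono t φ hφ ((σ.take b).drop a) (placeAt σ f a) hsub
  rw [← placeAt_split σ f hab] at h1
  have h2 := cCount_sub_le t σ f hab
  omega

lemma c_interval_anti (σ : List (Vtx m × Vtx m))
    (hedges : ∀ e ∈ σ, (TheGraph s).Adj e.1 e.2) (t : Tok m n) (φ : Vtx m → ℕ)
    (hφ : ∀ u v, (TheGraph s).Adj u v → φ u ≤ φ v + (if isContrary t u v then 1 else 0))
    {a b : ℕ} (hab : a ≤ b) (f : Tok m n → Vtx m) :
    φ (placeAt σ f a t) ≤ φ (placeAt σ f b t) + cCount t σ f := by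
  have hsub : ∀ e ∈ (σ.take b).drop a, (TheGraph s).Adj e.1 e.2 :=
    fun e he => hedges e (List.take_subset b σ (List.drop_subset _ _ he))
  have h1 := cCount_phi_anti t φ hφ ((σ.take b).drop a) (placeAt σ f a) hsub
  rw [← placeAt_split σ f hab] at h1
  have h2 := cCount_sub_le t σ f hab
  omega

lemma zphi_pos_of_mem {g : Option (Fin m)} {v : Vtx m} (hv : memGadget v g) :
    1 ≤ zphi (kk m n) g v := by
  rcases v with _ | d | ⟨i, d⟩ | i <;> rcases g with _ | i' <;>
    simp_all [memGadget, zphi]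

lemma zphi_zero_of_not_mem {g : Option (Fin m)} {v : Vtx m} (hv : ¬ memGadget v g) :
    zphi (kk m n) g v = 0 := by
  rcases v with _ | d | ⟨i, d⟩ | i <;> rcases g with _ | i' <;>
    simp_all [memGadget, zphi] <;> exact fun h => hv h.symm

lemma zphi_root_eq (g : Option (Fin m)) : zphi (kk m n) g Vtx.root = 0 := rfl

lemma zphi_ord_inj {u v : Vtx m} (h : zphi (kk m n) none u = zphi (kk m n) none v)
    (hu : 1 ≤ zphi (kk m n) none u) : u = v := by
  rcases u with _ | d | ⟨i, d⟩ | i <;> rcases v with _ | d' | ⟨i', d'⟩ | i' <;>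
    simp_all [zphi]

lemma zphi_slot_inj {i : Fin m} {u v : Vtx m}
    (h : zphi (kk m n) (some i) u = zphi (kk m n) (some i) v)
    (hu : 1 ≤ zphi (kk m n) (some i) u)
    (hnu : u ≠ Vtx.nook i) (hnv : v ≠ Vtx.nook i) : u = v := by
  rcases u with _ | d | ⟨i1, d⟩ | i1 <;> rcases v with _ | d' | ⟨i2, d'⟩ | i2 <;>
    simp_all [zphi] <;> split_ifs at * <;> simp_all

lemma zphi_nook_eq (i : Fin m) : zphi (kk m n) (some i) (Vtx.nook i) = kk m n + 1 := by
  simp [zphi]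

lemma sum_triangle {α : Type*} [DecidableEq α] (S : Finset α) (w : α → ℕ)
    (h1 : ∀ t ∈ S, 1 ≤ w t)
    (hinj : ∀ t ∈ S, ∀ t' ∈ S, w t = w t' → t = t') :
    S.card * (S.card + 1) ≤ 2 * ∑ t ∈ S, w t := by
  induction S using Finset.strongInduction with
  | _ S ih =>
    rcases Finset.eq_empty_or_nonempty S with rfl | hne
    · simp
    · obtain ⟨t₀, ht₀, hmax⟩ := Finset.exists_max_image S w hne
      have hcardle : S.card ≤ w t₀ := by
        have himg : S.image w ⊆ Finset.Icc 1 (w t₀) := by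
          intro x hx
          simp only [Finset.mem_image] at hx
          obtain ⟨t, ht, rfl⟩ := hx
          exact Finset.mem_Icc.mpr ⟨h1 t ht, hmax t ht⟩
        have hcard : (S.image w).card = S.card :=
          Finset.card_image_of_injOn (fun t ht t' ht' h => hinj t ht t' ht' h)
        have h5 := Finset.card_le_card himg
        rw [hcard, Nat.card_Icc] at h5
        omega
      have herase := ih (S.erase t₀) (Finset.erase_ssubset ht₀)
        (fun t ht => h1 t (Finset.mem_of_mem_erase ht))
        (fun t ht t' ht' h => hinj t (Finset.mem_of_mem_erase ht) t'
          (Finset.mem_of_mem_erase ht') h)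
      have hsum : ∑ t ∈ S, w t = w t₀ + ∑ t ∈ S.erase t₀, w t :=
        (Finset.add_sum_erase S w ht₀).symm
      have hcard2 : (S.erase t₀).card = S.card - 1 := Finset.card_erase_of_mem ht₀
      obtain ⟨c', hc'⟩ : ∃ c', S.card = c' + 1 :=
        ⟨S.card - 1, by have := Finset.card_pos.mpr hne; omega⟩
      rw [hsum, hc']
      rw [hcard2, hc'] at herase
      simp only [Nat.add_sub_cancel] at herase
      rw [hc'] at hcardle
      nlinarith [herase, hcardle]

end Escape

/-!
STATEMENT 8: Suppose `m, n > 1` and fix a swap sequence of length at most `K`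
transforming the initial placement of the constructed instance into its target
placement (stated in the doubled form `2·σ.length ≤ Σ_{t∈A}(d_t+1) + 2n`).  Let `S`
be a set of tokens that are all slot tokens or all non-slot tokens and let `g` be a
gadget.  If either (1) at some time all tokens of `S` are in `g` but each was outside
`g` at some earlier and at some later time, or (2) at two times `τ₁ < τ₂` all tokens
of `S` are in `g` but each token of `S` is at the root at some time in between, then
the tokens of `S` make at least `|S|²/2` contrary moves (stated as
`|S|² ≤ 2·Σ_{t∈S} c_t`), and consequently `|S| ≤ k^{1/2+1/25}` (stated in the
equivalent form `|S|² ≤ (mn)^27`, since `k = (mn)^25` gives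
`k^{1/2+1/25} = (mn)^{27/2}`).
-/
theorem gadget_escape_contrary_moves {m n : ℕ} (hm : 1 < m) (hn : 1 < n)
    (s : Fin n → Fin m) (π : Equiv.Perm (Option (Fin m)))
    (hπ0 : π none = none)
    (hocc : ∀ i : Fin m, ∃ j, s j = i)
    (hcons : ∀ (j : Fin n) (h : j.val + 1 < n), s j ≠ s ⟨j.val + 1, h⟩)
    (σ : List (Vtx m × Vtx m))
    (hedges : ∀ e ∈ σ, (TheGraph s).Adj e.1 e.2)
    (hsol : applySwaps σ (initTok s) = tgtTok s π)
    (hlen : 2 * σ.length ≤ (∑ t : NonItem m n, (dd s π (Sum.inr t) + 1)) + 2 * n)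
    (S : Finset (Tok m n)) (g : Option (Fin m))
    (htype : (∀ t ∈ S, isSlotTok t) ∨ (∀ t ∈ S, isNonSlotTok t))
    (hcase :
      (∃ τ ≤ σ.length, (∀ t ∈ S, memGadget (placeAt σ (initTok s) τ t) g) ∧
        ∀ t ∈ S,
          (∃ τ₁, τ₁ < τ ∧ ¬ memGadget (placeAt σ (initTok s) τ₁ t) g) ∧
          (∃ τ₂, τ < τ₂ ∧ τ₂ ≤ σ.length ∧ ¬ memGadget (placeAt σ (initTok s) τ₂ t) g)) ∨
      (∃ τ₁ τ₂, τ₁ < τ₂ ∧ τ₂ ≤ σ.length ∧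
        (∀ t ∈ S, memGadget (placeAt σ (initTok s) τ₁ t) g ∧
          memGadget (placeAt σ (initTok s) τ₂ t) g) ∧
        ∀ t ∈ S, ∃ τ', τ₁ ≤ τ' ∧ τ' ≤ τ₂ ∧ placeAt σ (initTok s) τ' t = Vtx.root)) :
    S.card ^ 2 ≤ 2 * ∑ t ∈ S, cCount t σ (initTok s) ∧
      S.card ^ 2 ≤ (m * n) ^ 27 := by
  classical
  have hinj : Function.Injective (initTok s) := initTok_injective hm hcons
  have hglobal := global_bound hm hn π σ hinj hedges hsol hlen
  have hnum := numeric_bound (m := m) (n := n) hm hn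
  have hSsum : ∑ t ∈ S, cCount t σ (initTok s) ≤
      ∑ t : NonItem m n, cCount (Sum.inr t) σ (initTok s) := by
    have hSsub : S ⊆ Finset.univ.image (Sum.inr : NonItem m n → Tok m n) := by
      intro t ht
      rcases t with o | u
      · rcases htype with hty | hty
        · exact absurd (hty _ ht) (fun h => h)
        · exact absurd (hty _ ht) (fun h => h)
      · exact Finset.mem_image.mpr ⟨u, Finset.mem_univ _, rfl⟩
    calc ∑ t ∈ S, cCount t σ (initTok s)
        ≤ ∑ t ∈ Finset.univ.image (Sum.inr : NonItem m n → Tok m n),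
            cCount t σ (initTok s) :=
          Finset.sum_le_sum_of_subset hSsub
      _ = ∑ t : NonItem m n, cCount (Sum.inr t) σ (initTok s) :=
          Finset.sum_image (fun x _ y _ h => Sum.inr.inj h)
  have hCbound : 2 * ∑ t ∈ S, cCount t σ (initTok s) ≤ (m*n)^27 := by omega
  obtain ⟨τs, hτs, hmem, hcb⟩ : ∃ τs, τs ≤ σ.length ∧
      (∀ t ∈ S, memGadget (placeAt σ (initTok s) τs t) g) ∧
      (∀ t ∈ S, zphi (kk m n) g (placeAt σ (initTok s) τs t) ≤
        cCount t σ (initTok s)) := by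
    rcases htype with hty | hty
    · rcases g with _ | i
      · rcases hcase with ⟨τ, hτ, hall, hout⟩ | ⟨τ₁, τ₂, h12, hτ₂, hall, hroot⟩
        · refine ⟨τ, hτ, hall, fun t ht => ?_⟩
          obtain ⟨τ₂, hτ2a, hτ2b, hτ2c⟩ := (hout t ht).2
          have hstep := step_slot_none (s := s) t (isContrary_of_slot (hty t ht))
          have hiv := c_interval_anti σ hedges t _ hstep (le_of_lt hτ2a) (initTok s)
          rw [zphi_zero_of_not_mem hτ2c] at hiv
          omega
        · refine ⟨τ₁, le_of_lt (lt_of_lt_of_le h12 hτ₂), fun t ht => (hall t ht).1,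
            fun t ht => ?_⟩
          obtain ⟨τ', h'a, h'b, h'c⟩ := hroot t ht
          have hstep := step_slot_none (s := s) t (isContrary_of_slot (hty t ht))
          have hiv := c_interval_anti σ hedges t _ hstep h'a (initTok s)
          rw [h'c, zphi_root_eq] at hiv
          omega
      · rcases hcase with ⟨τ, hτ, hall, hout⟩ | ⟨τ₁, τ₂, h12, hτ₂, hall, hroot⟩
        · refine ⟨τ, hτ, hall, fun t ht => ?_⟩
          obtain ⟨τ₁, hτ1a, hτ1c⟩ := (hout t ht).1
          have hstep := step_slot_some (s := s) i t (isContrary_of_slot (hty t ht))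
          have hiv := c_interval_mono σ hedges t _ hstep (le_of_lt hτ1a) (initTok s)
          rw [zphi_zero_of_not_mem hτ1c] at hiv
          omega
        · refine ⟨τ₂, hτ₂, fun t ht => (hall t ht).2, fun t ht => ?_⟩
          obtain ⟨τ', h'a, h'b, h'c⟩ := hroot t ht
          have hstep := step_slot_some (s := s) i t (isContrary_of_slot (hty t ht))
          have hiv := c_interval_mono σ hedges t _ hstep h'b (initTok s)
          rw [h'c, zphi_root_eq] at hiv
          omega
    · rcases g with _ | i
      · rcases hcase with ⟨τ, hτ, hall, hout⟩ | ⟨τ₁, τ₂, h12, hτ₂, hall, hroot⟩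
        · refine ⟨τ, hτ, hall, fun t ht => ?_⟩
          obtain ⟨τ₁, hτ1a, hτ1c⟩ := (hout t ht).1
          have hstep := step_nonslot_none (s := s) t (isContrary_of_nonslot (hty t ht))
          have hiv := c_interval_mono σ hedges t _ hstep (le_of_lt hτ1a) (initTok s)
          rw [zphi_zero_of_not_mem hτ1c] at hiv
          omega
        · refine ⟨τ₂, hτ₂, fun t ht => (hall t ht).2, fun t ht => ?_⟩
          obtain ⟨τ', h'a, h'b, h'c⟩ := hroot t ht
          have hstep := step_nonslot_none (s := s) t (isContrary_of_nonslot (hty t ht))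
          have hiv := c_interval_mono σ hedges t _ hstep h'b (initTok s)
          rw [h'c, zphi_root_eq] at hiv
          omega
      · rcases hcase with ⟨τ, hτ, hall, hout⟩ | ⟨τ₁, τ₂, h12, hτ₂, hall, hroot⟩
        · refine ⟨τ, hτ, hall, fun t ht => ?_⟩
          obtain ⟨τ₂, hτ2a, hτ2b, hτ2c⟩ := (hout t ht).2
          have hstep := step_nonslot_some (s := s) i t (isContrary_of_nonslot (hty t ht))
          have hiv := c_interval_anti σ hedges t _ hstep (le_of_lt hτ2a) (initTok s)
          rw [zphi_zero_of_not_mem hτ2c] at hiv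
          omega
        · refine ⟨τ₁, le_of_lt (lt_of_lt_of_le h12 hτ₂), fun t ht => (hall t ht).1,
            fun t ht => ?_⟩
          obtain ⟨τ', h'a, h'b, h'c⟩ := hroot t ht
          have hstep := step_nonslot_some (s := s) i t (isContrary_of_nonslot (hty t ht))
          have hiv := c_interval_anti σ hedges t _ hstep h'a (initTok s)
          rw [h'c, zphi_root_eq] at hiv
          omega
  have hposinj : Function.Injective (placeAt σ (initTok s) τs) := by
    unfold placeAt
    exact applySwaps_injective _ _ hinj
  have hw1 : ∀ t ∈ S, 1 ≤ zphi (kk m n) g (placeAt σ (initTok s) τs t) :=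
    fun t ht => zphi_pos_of_mem (hmem t ht)
  have hwsum : ∑ t ∈ S, zphi (kk m n) g (placeAt σ (initTok s) τs t) ≤
      ∑ t ∈ S, cCount t σ (initTok s) := Finset.sum_le_sum hcb
  have hfirst : S.card ^ 2 ≤ 2 * ∑ t ∈ S, cCount t σ (initTok s) := by
    rcases g with _ | i
    · have hinjw : ∀ t ∈ S, ∀ t' ∈ S,
          zphi (kk m n) none (placeAt σ (initTok s) τs t) =
            zphi (kk m n) none (placeAt σ (initTok s) τs t') → t = t' :=
        fun t ht t' ht' h => hposinj (zphi_ord_inj h (hw1 t ht))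
      have htri := sum_triangle S _ hw1 hinjw
      have e1 : S.card ^ 2 = S.card * S.card := by ring
      have e2 : S.card * (S.card + 1) = S.card * S.card + S.card := by ring
      omega
    · by_cases hnook : ∃ t₀ ∈ S, placeAt σ (initTok s) τs t₀ = Vtx.nook i
      · obtain ⟨t₀, ht₀, hpos0⟩ := hnook
        have hinjw : ∀ t ∈ S.erase t₀, ∀ t' ∈ S.erase t₀,
            zphi (kk m n) (some i) (placeAt σ (initTok s) τs t) =
              zphi (kk m n) (some i) (placeAt σ (initTok s) τs t') → t = t' := by
          intro t ht t' ht' h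
          have hta : t ∈ S := Finset.mem_of_mem_erase ht
          have hta' : t' ∈ S := Finset.mem_of_mem_erase ht'
          refine hposinj (zphi_slot_inj h (hw1 t hta) ?_ ?_)
          · intro hc
            exact (Finset.ne_of_mem_erase ht) (hposinj (hc.trans hpos0.symm))
          · intro hc
            exact (Finset.ne_of_mem_erase ht') (hposinj (hc.trans hpos0.symm))
        have htri := sum_triangle (S.erase t₀) _
          (fun t ht => hw1 t (Finset.mem_of_mem_erase ht)) hinjw
        have hsum0 : ∑ t ∈ S, zphi (kk m n) (some i) (placeAt σ (initTok s) τs t) =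
            zphi (kk m n) (some i) (placeAt σ (initTok s) τs t₀) +
            ∑ t ∈ S.erase t₀, zphi (kk m n) (some i) (placeAt σ (initTok s) τs t) :=
          (Finset.add_sum_erase S _ ht₀).symm
        have hw0 : zphi (kk m n) (some i) (placeAt σ (initTok s) τs t₀) = kk m n + 1 := by
          rw [hpos0]; exact zphi_nook_eq i
        have hce : (S.erase t₀).card = S.card - 1 := Finset.card_erase_of_mem ht₀
        obtain ⟨r', hr'⟩ : ∃ r', S.card = r' + 1 :=
          ⟨S.card - 1, by have := Finset.card_pos.mpr ⟨t₀, ht₀⟩; omega⟩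
        rw [hce, hr'] at htri
        simp only [Nat.add_sub_cancel] at htri
        by_cases hr : S.card ≤ 2 * kk m n + 2
        · have e1 : (r' + 1) ^ 2 = r' * (r' + 1) + (r' + 1) := by ring
          rw [hr']
          omega
        · exfalso
          have hbig : 2 * kk m n + 2 ≤ r' := by omega
          have hmul : (2 * kk m n + 2) * (2 * kk m n + 3) ≤ r' * (r' + 1) :=
            Nat.mul_le_mul hbig (by omega)
          have e2 : (2 * kk m n + 2) * (2 * kk m n + 3) =
              4 * (kk m n * kk m n) + 10 * kk m n + 6 := by ring
          have hκ : (m*n)^27 ≤ kk m n * kk m n := by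
            have h50 : (m*n)^27 ≤ (m*n)^50 :=
              Nat.pow_le_pow_right (by positivity) (by omega)
            have h50' : (m*n)^50 = kk m n * kk m n := by
              rw [kk, ← pow_add]
            omega
          omega
      · push_neg at hnook
        have hinjw : ∀ t ∈ S, ∀ t' ∈ S,
            zphi (kk m n) (some i) (placeAt σ (initTok s) τs t) =
              zphi (kk m n) (some i) (placeAt σ (initTok s) τs t') → t = t' :=
          fun t ht t' ht' h =>
            hposinj (zphi_slot_inj h (hw1 t ht) (hnook t ht) (hnook t' ht'))
        have htri := sum_triangle S _ hw1 hinjw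
        have e1 : S.card ^ 2 = S.card * S.card := by ring
        have e2 : S.card * (S.card + 1) = S.card * S.card + S.card := by ring
        omega
  exact ⟨hfirst, le_trans hfirst hCbound⟩


end UnweightedTS
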